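/- Let M be a Markov chain with n = |S| states, absorbing targets T, and weight function w : T → [0,∞), in which every state can reach T along edges, and let val be its weighted reachability value vector and L its reachability Bellman update. Then for every vector v : S → ℝ with v(t) = w(t) for all t ∈ T and every integer t ≥ 1: ‖L^{n·t} v − val‖_∞ ≤ (1 − p_min^n)^t · ‖v − val‖_∞. -/
import Mathlib


/-- A finite Markov chain: transition function `δ` (nonnegative, rows sum to 1)
together with a set `T` of absorbing target states. There is an edge `s → s'`
iff `δ s s' > 0`. -/
structure MC (S : Type) [Fintype S] [DecidableEq S] where
  δ : S → S → ℝ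
  T : Finset S
  nonneg : ∀ s s' : S, 0 ≤ δ s s'
  rowsum : ∀ s : S, ∑ s' : S, δ s s' = 1
  absorbing : ∀ t ∈ T, δ t t = 1

variable {S : Type} [Fintype S] [DecidableEq S]

/-- Edge relation of a Markov chain: `s → s'` iff `δ s s' > 0`. -/
def MC.edge (M : MC S) (a b : S) : Prop := 0 < M.δ a b

/-- `pathLen r n a b`: there is a path of length `n` from `a` to `b` along `r`. -/
def pathLen (r : S → S → Prop) : ℕ → S → S → Prop
  | 0 => fun a b => a = b
  | n + 1 => fun a c => ∃ b, r a b ∧ pathLen r n b c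

/-- `reaches r A s`: `s` can reach the set `A` along the relation `r`. -/
def reaches (r : S → S → Prop) (A : Set S) (s : S) : Prop :=
  ∃ n, ∃ a ∈ A, pathLen r n s a

/-- Length of a shortest path from `s` to the set `A` along `r`. -/
noncomputable def distTo (r : S → S → Prop) (A : Set S) (s : S) : ℕ :=
  sInf {n | ∃ a ∈ A, pathLen r n s a}

/-- Level `0`: the targets together with all states that cannot reach the targets. -/
def MC.level0 (M : MC S) : Set S :=
  {s | s ∈ M.T ∨ ¬ reaches M.edge (M.T : Set S) s}

/-- The levels of a Markov chain: `ℓ_0` is `level0`, and for `i ≥ 1`, `ℓ_i` is the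
set of states whose shortest edge-path distance to `ℓ_0` is exactly `i`. -/
noncomputable def MC.levelSet (M : MC S) : ℕ → Set S
  | 0 => M.level0
  | i + 1 => {s | distTo M.edge M.level0 s = i + 1}

/-- `M` has (exactly) `k` levels: `ℓ_k` is the last nonempty level. -/
def MC.hasLevels (M : MC S) (k : ℕ) : Prop :=
  (M.levelSet k).Nonempty ∧ ∀ i, k < i → M.levelSet i = ∅

/-- One-step transition matrix of the Markov chain. -/
noncomputable def MC.P (M : MC S) : Matrix S S ℝ := Matrix.of M.δ

/-- Weighted reachability value `val(s) = E_s[w(X_{t*}) · 1{t* < ∞}]`, where `t*` is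
the first hitting time of `T`. Since `T` is absorbing, this equals the supremum
(monotone limit) over `n` of `∑_{t ∈ T} (δⁿ)(s,t)·w(t)`. -/
noncomputable def MC.reachVal (M : MC S) (w : S → ℝ) (s : S) : ℝ :=
  ⨆ n : ℕ, ∑ t ∈ M.T, (M.P ^ n) s t * w t

/-- Stochastic shortest path value `val(s) = E_s[∑_{t=0}^{t*} w(X_t)]`, where `t*` is
the first hitting time of `T`: the expected weight collected strictly before `T`
(states outside `T`, counted via the `n`-step distributions) plus the expected weight
of the first target state hit. -/
noncomputable def MC.sspVal (M : MC S) (w : S → ℝ) (s : S) : ℝ :=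
  (∑' n : ℕ, ∑ s' ∈ Finset.univ.filter (fun x => x ∉ M.T), (M.P ^ n) s s' * w s')
    + M.reachVal w s

/-- Smallest positive transition probability of the Markov chain. -/
noncomputable def MC.pmin (M : MC S) : ℝ :=
  sInf {p : ℝ | 0 < p ∧ ∃ s s' : S, M.δ s s' = p}

/-- Reachability Bellman update. -/
noncomputable def MC.reachUpdate (M : MC S) (w : S → ℝ) (v : S → ℝ) : S → ℝ :=
  fun s => if s ∈ M.T then w s else ∑ s' : S, M.δ s s' * v s'

/-- SSP Bellman update. -/
noncomputable def MC.sspUpdate (M : MC S) (w : S → ℝ) (v : S → ℝ) : S → ℝ :=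
  fun s => if s ∈ M.T then w s else w s + ∑ s' : S, M.δ s s' * v s'

/-- The reduced Markov chain `M[s = ·]`: the state `s` is made absorbing (its row of
`δ` replaced by the point mass at `s`) and added to the target set. -/
def MC.reduce (M : MC S) (s : S) : MC S where
  δ := fun a b => if a = s then (if b = s then 1 else 0) else M.δ a b
  T := insert s M.T
  nonneg := by
    intro a b
    by_cases h : a = s
    · by_cases h' : b = s <;> simp [h, h']
    · simpa [h] using M.nonneg a b
  rowsum := by
    intro a
    by_cases h : a = s
    · simp [h]
    · simpa [h] using M.rowsum a
  absorbing := by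
    intro t ht
    rcases Finset.mem_insert.mp ht with h | h
    · simp [h]
    · by_cases h' : t = s
      · simp [h']
      · simpa [h'] using M.absorbing t h

/-- Probability, in `M`, of ever visiting the state `s` when starting from `a`,
i.e. `P_a(∃ t ≥ 0, X_t = s)` (computed as a reachability value after making `s`
absorbing, which does not change the dynamics before the first visit to `s`). -/
noncomputable def MC.hitProb (M : MC S) (a s : S) : ℝ :=
  (M.reduce s).reachVal (fun b => if b = s then 1 else 0) a

/-- Probability of having reached `T` within `i` steps, `P_s(∃ t ≤ i, X_t ∈ T)`;
since `T` is absorbing this equals `∑_{t ∈ T} (δ^i)(s,t)`. -/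
noncomputable def MC.hitBy (M : MC S) (s : S) (i : ℕ) : ℝ :=
  ∑ t ∈ M.T, (M.P ^ i) s t
set_option linter.unusedSectionVars false

section PathAux
variable {S : Type} [Fintype S] [DecidableEq S]

lemma pathLen_trans {r : S → S → Prop} : ∀ {m n : ℕ} {a b c : S},
    pathLen r m a b → pathLen r n b c → pathLen r (m + n) a c := by
  intro m
  induction m with
  | zero => intro n a b c h1 h2; cases h1; simpa using h2
  | succ m ih =>
    intro n a b c h1 h2
    obtain ⟨x, hx, hp⟩ := h1
    show pathLen r (m + 1 + n) a c
    have : m + 1 + n = (m + n) + 1 := by omega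
    rw [this]
    exact ⟨x, hx, ih hp h2⟩

lemma pathLen_one {r : S → S → Prop} {a b : S} (h : r a b) : pathLen r 1 a b :=
  ⟨b, h, rfl⟩

lemma pathLen_snoc {r : S → S → Prop} {m : ℕ} {a b c : S}
    (h1 : pathLen r m a b) (h2 : r b c) : pathLen r (m + 1) a c :=
  pathLen_trans h1 (pathLen_one h2)

lemma pathLen_split {r : S → S → Prop} : ∀ (i : ℕ) {j : ℕ} {s a : S},
    pathLen r (i + j) s a → ∃ m, pathLen r i s m ∧ pathLen r j m a := by
  intro i
  induction i with
  | zero =>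
    intro j s a h
    rw [Nat.zero_add] at h
    exact ⟨s, rfl, h⟩
  | succ i ih =>
    intro j s a h
    have h' : pathLen r ((i + j) + 1) s a := by
      have : i + 1 + j = (i + j) + 1 := by omega
      rwa [this] at h
    obtain ⟨b, hb, hp⟩ := h'
    obtain ⟨m, hm1, hm2⟩ := ih hp
    exact ⟨m, ⟨b, hb, hm1⟩, hm2⟩

lemma exists_short_path {r : S → S → Prop} {A : Set S} {s : S}
    (h : reaches r A s) : ∃ k < Fintype.card S, ∃ a ∈ A, pathLen r k s a := by
  classical
  set Z : Set ℕ := {n | ∃ a ∈ A, pathLen r n s a} with hZ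
  have hne : Z.Nonempty := h
  set K := sInf Z with hK
  have hKmem : K ∈ Z := Nat.sInf_mem hne
  refine ⟨K, ?_, hKmem⟩
  by_contra hbig
  push_neg at hbig
  obtain ⟨a, ha, hpa⟩ := hKmem
  have hsplit : ∀ i : Fin (K + 1), ∃ m, pathLen r i s m ∧ pathLen r (K - i) m a := by
    intro i
    have h2 : pathLen r (i + (K - i)) s a := by
      have he : (i : ℕ) + (K - i) = K := by omega
      rwa [he]
    exact pathLen_split i h2
  choose f hf1 hf2 using hsplit
  have hcard : Fintype.card S < Fintype.card (Fin (K + 1)) := by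
    simpa using Nat.lt_succ_of_le hbig
  obtain ⟨i, j, hij, hfeq⟩ := Fintype.exists_ne_map_eq_of_card_lt f hcard
  have key : ∀ i j : Fin (K + 1), f i = f j → (i : ℕ) < (j : ℕ) → False := by
    intro i j hfe hlt
    have hshort : pathLen r ((i : ℕ) + (K - j)) s a :=
      pathLen_trans (hf1 i) (hfe ▸ hf2 j)
    have hle : K ≤ (i : ℕ) + (K - j) := Nat.sInf_le ⟨a, ha, hshort⟩
    have hj : (j : ℕ) ≤ K := by omega
    have hi : (i : ℕ) < K + 1 := i.isLt
    omega
  have : (i : ℕ) ≠ (j : ℕ) := fun he => hij (Fin.ext he)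
  rcases Nat.lt_or_ge (i : ℕ) (j : ℕ) with hlt | hge
  · exact key i j hfeq hlt
  · exact key j i hfeq.symm (by omega)

end PathAux
section MCAux
variable {S : Type} [Fintype S] [DecidableEq S]

namespace MC
variable (M : MC S)

lemma delta_le_one (s s' : S) : M.δ s s' ≤ 1 := by
  have h := M.rowsum s
  calc M.δ s s' ≤ ∑ x : S, M.δ s x :=
        Finset.single_le_sum (fun x _ => M.nonneg s x) (Finset.mem_univ s')
    _ = 1 := h

lemma absorbing_row {s : S} (hs : s ∈ M.T) (t : S) :
    M.δ s t = if t = s then 1 else 0 := by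
  by_cases ht : t = s
  · simp [ht, M.absorbing s hs]
  · simp only [ht, if_false]
    by_contra h0
    have hpos : 0 < M.δ s t := lt_of_le_of_ne (M.nonneg s t) (Ne.symm h0)
    have h1 : 1 + M.δ s t ≤ ∑ x : S, M.δ s x := by
      have := Finset.add_sum_erase Finset.univ (M.δ s) (Finset.mem_univ s)
      rw [← this, M.absorbing s hs]
      have hmem : t ∈ Finset.univ.erase s := Finset.mem_erase.mpr ⟨ht, Finset.mem_univ t⟩
      have := Finset.single_le_sum (f := M.δ s)
        (fun x _ => M.nonneg s x) hmem
      linarith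
    rw [M.rowsum s] at h1
    linarith

lemma Ppow_nonneg (k : ℕ) (s t : S) : 0 ≤ (M.P ^ k) s t := by
  induction k generalizing s t with
  | zero => by_cases h : s = t <;> simp [h, Matrix.one_apply]
  | succ k ih =>
    rw [pow_succ, Matrix.mul_apply]
    exact Finset.sum_nonneg fun m _ => mul_nonneg (ih s m) (M.nonneg m t)

lemma Ppow_rowsum (k : ℕ) (s : S) : ∑ t : S, (M.P ^ k) s t = 1 := by
  induction k generalizing s with
  | zero => simp [Matrix.one_apply]
  | succ k ih =>
    simp only [pow_succ, Matrix.mul_apply]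
    rw [Finset.sum_comm]
    calc ∑ m : S, ∑ t : S, (M.P ^ k) s m * M.P m t
        = ∑ m : S, (M.P ^ k) s m * ∑ t : S, M.P m t := by
          simp [Finset.mul_sum]
      _ = 1 := by
          simp only [MC.P, Matrix.of_apply, M.rowsum, mul_one]
          exact ih s

lemma Ppow_le_one (k : ℕ) (s t : S) : (M.P ^ k) s t ≤ 1 := by
  have h := M.Ppow_rowsum k s
  calc (M.P ^ k) s t ≤ ∑ x : S, (M.P ^ k) s x :=
        Finset.single_le_sum (fun x _ => M.Ppow_nonneg k s x) (Finset.mem_univ t)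
    _ = 1 := h

lemma Ppow_absorbing {s : S} (hs : s ∈ M.T) (k : ℕ) (t : S) :
    (M.P ^ k) s t = if t = s then 1 else 0 := by
  induction k generalizing t with
  | zero =>
    rw [pow_zero, Matrix.one_apply]
    by_cases h : t = s
    · simp [h]
    · rw [if_neg h, if_neg (fun he => h he.symm)]
  | succ k ih =>
    rw [pow_succ', Matrix.mul_apply]
    have : ∀ m : S, M.P s m * (M.P ^ k) m t
        = if m = s then (if t = s then 1 else 0) else 0 := by
      intro m
      show M.δ s m * (M.P ^ k) m t = _
      rw [M.absorbing_row hs m]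
      by_cases hm : m = s
      · subst hm; rw [ih]; simp
      · simp [hm]
    rw [Finset.sum_congr rfl fun m _ => this m]
    simp

/-- the set defining pmin -/
lemma pmin_set_nonempty [Nonempty S] :
    {p : ℝ | 0 < p ∧ ∃ s s' : S, M.δ s s' = p}.Nonempty := by
  classical
  obtain ⟨s⟩ := (inferInstance : Nonempty S)
  have : ∃ s' : S, 0 < M.δ s s' := by
    by_contra h
    push_neg at h
    have : ∑ s' : S, M.δ s s' ≤ 0 :=
      Finset.sum_nonpos fun x _ => h x
    rw [M.rowsum s] at this; linarith
  obtain ⟨s', hs'⟩ := this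
  exact ⟨M.δ s s', hs', s, s', rfl⟩

lemma pmin_nonneg [Nonempty S] : 0 ≤ M.pmin :=
  le_csInf (M.pmin_set_nonempty) fun p hp => le_of_lt hp.1

lemma pmin_le {s s' : S} (h : 0 < M.δ s s') : M.pmin ≤ M.δ s s' :=
  csInf_le ⟨0, fun p hp => le_of_lt hp.1⟩ ⟨h, s, s', rfl⟩

lemma pmin_le_one [Nonempty S] : M.pmin ≤ 1 := by
  obtain ⟨p, hp, s, s', hd⟩ := M.pmin_set_nonempty
  calc M.pmin ≤ M.δ s s' := M.pmin_le (hd ▸ hp)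
    _ ≤ 1 := M.delta_le_one s s'

lemma edge_self_of_target {t : S} (ht : t ∈ M.T) : M.edge t t := by
  show 0 < M.δ t t
  rw [M.absorbing t ht]; norm_num

lemma pathLen_extend {t s : S} (ht : t ∈ M.T) {k : ℕ} (h : pathLen M.edge k s t) :
    ∀ j, pathLen M.edge (k + j) s t := by
  intro j
  induction j with
  | zero => exact h
  | succ j ih => exact pathLen_snoc ih (M.edge_self_of_target ht)

lemma exists_path_card {s : S} (h : reaches M.edge (M.T : Set S) s) :
    ∃ t ∈ M.T, pathLen M.edge (Fintype.card S) s t := by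
  obtain ⟨k, hk, a, ha, hp⟩ := exists_short_path h
  refine ⟨a, ha, ?_⟩
  have := M.pathLen_extend ha hp (Fintype.card S - k)
  have he : k + (Fintype.card S - k) = Fintype.card S := by omega
  rwa [he] at this

end MC
end MCAux
section ValAux
variable {S : Type} [Fintype S] [DecidableEq S]

namespace MC
variable (M : MC S)

/-- finite-step approximations of the reachability value -/
noncomputable def fapprox (w : S → ℝ) (k : ℕ) (s : S) : ℝ :=
  ∑ t ∈ M.T, (M.P ^ k) s t * w t

lemma P_apply (s t : S) : M.P s t = M.δ s t := rfl

lemma Ppow_mono_target {w : S → ℝ} (hw : ∀ t ∈ M.T, 0 ≤ w t) (s : S) :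
    Monotone (fun k => M.fapprox w k s) := by
  apply monotone_nat_of_le_succ
  intro k
  apply Finset.sum_le_sum
  intro t ht
  apply mul_le_mul_of_nonneg_right _ (hw t ht)
  rw [pow_succ, Matrix.mul_apply]
  have h1 : (M.P ^ k) s t * M.P t t ≤ ∑ m : S, (M.P ^ k) s m * M.P m t :=
    Finset.single_le_sum
      (fun m _ => mul_nonneg (M.Ppow_nonneg k s m) (M.nonneg m t))
      (Finset.mem_univ t)
  rw [P_apply, M.absorbing t ht, mul_one] at h1
  exact h1

lemma fapprox_bdd {w : S → ℝ} (hw : ∀ t ∈ M.T, 0 ≤ w t) (k : ℕ) (s : S) :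
    M.fapprox w k s ≤ ∑ t ∈ M.T, w t := by
  apply Finset.sum_le_sum
  intro t ht
  calc (M.P ^ k) s t * w t ≤ 1 * w t :=
        mul_le_mul_of_nonneg_right (M.Ppow_le_one k s t) (hw t ht)
    _ = w t := one_mul _

lemma fapprox_tendsto {w : S → ℝ} (hw : ∀ t ∈ M.T, 0 ≤ w t) (s : S) :
    Filter.Tendsto (fun k => M.fapprox w k s) Filter.atTop (nhds (M.reachVal w s)) := by
  have : M.reachVal w s = ⨆ k, M.fapprox w k s := rfl
  rw [this]
  apply tendsto_atTop_ciSup (M.Ppow_mono_target hw s)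
  exact ⟨∑ t ∈ M.T, w t, by rintro x ⟨k, rfl⟩; exact M.fapprox_bdd hw k s⟩

lemma fapprox_target {w : S → ℝ} {t : S} (ht : t ∈ M.T) (k : ℕ) :
    M.fapprox w k t = w t := by
  unfold fapprox
  rw [Finset.sum_congr rfl fun x _ => by rw [M.Ppow_absorbing ht k x]]
  simp [Finset.sum_ite_eq' M.T t w, ht]

lemma reachVal_target {w : S → ℝ} {t : S} (ht : t ∈ M.T) :
    M.reachVal w t = w t := by
  show (⨆ k, M.fapprox w k t) = w t
  rw [funext fun k => M.fapprox_target ht k]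
  exact ciSup_const

lemma fapprox_step (w : S → ℝ) (k : ℕ) (s : S) :
    M.fapprox w (k + 1) s = ∑ s' : S, M.δ s s' * M.fapprox w k s' := by
  unfold fapprox
  simp only [pow_succ', Matrix.mul_apply, Finset.sum_mul, Finset.mul_sum]
  rw [Finset.sum_comm]
  apply Finset.sum_congr rfl
  intro x _
  apply Finset.sum_congr rfl
  intro i _
  rw [P_apply, mul_assoc]

lemma reachVal_fixed {w : S → ℝ} (hw : ∀ t ∈ M.T, 0 ≤ w t) :
    M.reachUpdate w (M.reachVal w) = M.reachVal w := by
  funext s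
  by_cases hs : s ∈ M.T
  · simp [reachUpdate, hs, M.reachVal_target hs]
  · simp only [reachUpdate, hs, if_false]
    -- both sides are limits
    have h1 : Filter.Tendsto (fun k => M.fapprox w (k + 1) s) Filter.atTop
        (nhds (M.reachVal w s)) :=
      (M.fapprox_tendsto hw s).comp (Filter.tendsto_add_atTop_nat 1)
    have h2 : Filter.Tendsto (fun k => ∑ s' : S, M.δ s s' * M.fapprox w k s')
        Filter.atTop (nhds (∑ s' : S, M.δ s s' * M.reachVal w s')) := by
      apply tendsto_finset_sum
      intro s' _
      exact (M.fapprox_tendsto hw s').const_mul _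
    have heq : (fun k => M.fapprox w (k + 1) s)
        = fun k => ∑ s' : S, M.δ s s' * M.fapprox w k s' :=
      funext fun k => M.fapprox_step w k s
    rw [heq] at h1
    exact tendsto_nhds_unique h2 h1

end MC
end ValAux
section QAux
variable {S : Type} [Fintype S] [DecidableEq S]

namespace MC
variable (M : MC S)

/-- Transition matrix with the rows of target states zeroed out. -/
noncomputable def Qmat : Matrix S S ℝ :=
  Matrix.of fun s s' => if s ∈ M.T then 0 else M.δ s s'

lemma Qmat_nonneg (s s' : S) : 0 ≤ M.Qmat s s' := by
  unfold Qmat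
  by_cases h : s ∈ M.T <;> simp [h, M.nonneg s s']

lemma Qmat_pow_nonneg (k : ℕ) (s s' : S) : 0 ≤ (M.Qmat ^ k) s s' := by
  induction k generalizing s s' with
  | zero => by_cases h : s = s' <;> simp [h, Matrix.one_apply]
  | succ k ih =>
    rw [pow_succ, Matrix.mul_apply]
    exact Finset.sum_nonneg fun m _ => mul_nonneg (ih s m) (M.Qmat_nonneg m s')

lemma Qmat_rowsum_le (s : S) : ∑ s' : S, M.Qmat s s' ≤ 1 := by
  unfold Qmat
  by_cases h : s ∈ M.T
  · simp [h]
  · simp only [Matrix.of_apply, h, if_false]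
    rw [M.rowsum s]

lemma Qmat_pow_rowsum_le (k : ℕ) (s : S) : ∑ s' : S, (M.Qmat ^ k) s s' ≤ 1 := by
  induction k generalizing s with
  | zero => simp [Matrix.one_apply]
  | succ k ih =>
    simp only [pow_succ', Matrix.mul_apply]
    rw [Finset.sum_comm]
    calc ∑ m : S, ∑ s' : S, M.Qmat s m * (M.Qmat ^ k) m s'
        = ∑ m : S, M.Qmat s m * ∑ s' : S, (M.Qmat ^ k) m s' := by
          simp [Finset.mul_sum]
      _ ≤ ∑ m : S, M.Qmat s m * 1 := by
          apply Finset.sum_le_sum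
          intro m _
          exact mul_le_mul_of_nonneg_left (ih m) (M.Qmat_nonneg s m)
      _ ≤ 1 := by simpa using M.Qmat_rowsum_le s

/-- probability mass on non-target states after `k` steps of the killed chain -/
noncomputable def qres (k : ℕ) (s : S) : ℝ :=
  ∑ s' ∈ Finset.univ.filter (fun x => x ∉ M.T), (M.Qmat ^ k) s s'

lemma qres_nonneg (k : ℕ) (s : S) : 0 ≤ M.qres k s :=
  Finset.sum_nonneg fun s' _ => M.Qmat_pow_nonneg k s s'

lemma qres_le_one (k : ℕ) (s : S) : M.qres k s ≤ 1 := by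
  unfold qres
  calc ∑ s' ∈ Finset.univ.filter (fun x => x ∉ M.T), (M.Qmat ^ k) s s'
      ≤ ∑ s' : S, (M.Qmat ^ k) s s' := by
        apply Finset.sum_le_sum_of_subset_of_nonneg (Finset.filter_subset _ _)
        intro x _ _
        exact M.Qmat_pow_nonneg k s x
    _ ≤ 1 := M.Qmat_pow_rowsum_le k s

lemma qres_target {s : S} (hs : s ∈ M.T) (k : ℕ) : M.qres k s = 0 := by
  unfold qres
  cases k with
  | zero =>
    apply Finset.sum_eq_zero
    intro x hx
    rw [Finset.mem_filter] at hx
    have : s ≠ x := fun he => hx.2 (he ▸ hs)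
    simp [Matrix.one_apply, this]
  | succ k =>
    apply Finset.sum_eq_zero
    intro x _
    rw [pow_succ', Matrix.mul_apply]
    apply Finset.sum_eq_zero
    intro m _
    have : M.Qmat s m = 0 := by unfold Qmat; simp [hs]
    rw [this, zero_mul]

lemma qres_step (k : ℕ) (s : S) :
    M.qres (k + 1) s = ∑ m : S, M.Qmat s m * M.qres k m := by
  unfold qres
  simp only [pow_succ', Matrix.mul_apply, Finset.mul_sum]
  rw [Finset.sum_comm]

lemma qres_path [Nonempty S] :
    ∀ (k : ℕ) (s : S), (∃ a ∈ M.T, pathLen M.edge k s a) →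
      M.qres k s ≤ 1 - M.pmin ^ k := by
  intro k
  induction k with
  | zero =>
    intro s ⟨a, ha, hp⟩
    cases hp
    rw [M.qres_target ha 0]
    norm_num
  | succ k ih =>
    intro s ⟨a, ha, hp⟩
    have hpk1 : M.pmin ^ (k + 1) ≤ 1 :=
      pow_le_one₀ M.pmin_nonneg M.pmin_le_one
    by_cases hs : s ∈ M.T
    · rw [M.qres_target hs]
      linarith
    · obtain ⟨b, hb, hpb⟩ := hp
      have hIH : M.qres k b ≤ 1 - M.pmin ^ k := ih b ⟨a, ha, hpb⟩
      have hdb : M.pmin ≤ M.δ s b := M.pmin_le hb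
      have hdbpos : 0 < M.δ s b := hb
      rw [M.qres_step k s]
      have hQrow : ∀ m, M.Qmat s m = M.δ s m := by
        intro m; unfold Qmat; simp [hs]
      have hsplit : M.Qmat s b * M.qres k b
            + ∑ m ∈ Finset.univ.erase b, M.Qmat s m * M.qres k m
          = ∑ m : S, M.Qmat s m * M.qres k m :=
        Finset.add_sum_erase Finset.univ
          (fun m => M.Qmat s m * M.qres k m) (Finset.mem_univ b)
      rw [← hsplit]
      have hrest : ∑ m ∈ Finset.univ.erase b, M.Qmat s m * M.qres k m
          ≤ ∑ m ∈ Finset.univ.erase b, M.δ s m := by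
        apply Finset.sum_le_sum
        intro m _
        rw [hQrow m]
        calc M.δ s m * M.qres k m ≤ M.δ s m * 1 :=
              mul_le_mul_of_nonneg_left (M.qres_le_one k m) (M.nonneg s m)
          _ = M.δ s m := mul_one _
      have hrowrest : ∑ m ∈ Finset.univ.erase b, M.δ s m = 1 - M.δ s b := by
        have h2 : M.δ s b + ∑ m ∈ Finset.univ.erase b, M.δ s m = ∑ m : S, M.δ s m :=
          Finset.add_sum_erase Finset.univ (M.δ s) (Finset.mem_univ b)
        rw [M.rowsum s] at h2
        linarith
      have hmain : M.Qmat s b * M.qres k b ≤ M.δ s b * (1 - M.pmin ^ k) := by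
        rw [hQrow b]
        exact mul_le_mul_of_nonneg_left hIH (M.nonneg s b)
      have hpk : 0 ≤ M.pmin ^ k := pow_nonneg M.pmin_nonneg k
      have : M.pmin * M.pmin ^ k ≤ M.δ s b * M.pmin ^ k :=
        mul_le_mul_of_nonneg_right hdb hpk
      rw [pow_succ']
      nlinarith [hrest, hrowrest, hmain]

lemma qres_card [Nonempty S] (hreach : ∀ a : S, reaches M.edge (M.T : Set S) a)
    (s : S) : M.qres (Fintype.card S) s ≤ 1 - M.pmin ^ (Fintype.card S) := by
  obtain ⟨t, ht, hp⟩ := M.exists_path_card (hreach s)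
  exact M.qres_path (Fintype.card S) s ⟨t, ht, hp⟩

end MC
end QAux
section IterAux
variable {S : Type} [Fintype S] [DecidableEq S]

namespace MC
variable (M : MC S)

lemma update_sub_val {w : S → ℝ} (hw : ∀ t ∈ M.T, 0 ≤ w t) (u : S → ℝ) :
    M.reachUpdate w u - M.reachVal w = M.Qmat.mulVec (u - M.reachVal w) := by
  funext s
  have hfix := congrFun (M.reachVal_fixed hw) s
  by_cases hs : s ∈ M.T
  · have hrow : ∀ m, M.Qmat s m = 0 := by intro m; unfold Qmat; simp [hs]
    simp only [Pi.sub_apply, Matrix.mulVec, dotProduct]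
    rw [Finset.sum_congr rfl fun m _ => by rw [hrow m, zero_mul]]
    simp [reachUpdate, hs, M.reachVal_target hs]
  · have hrow : ∀ m, M.Qmat s m = M.δ s m := by intro m; unfold Qmat; simp [hs]
    simp only [Pi.sub_apply, Matrix.mulVec, dotProduct]
    rw [Finset.sum_congr rfl fun m _ => by rw [hrow m]]
    simp only [reachUpdate, hs, if_false] at hfix ⊢
    rw [← hfix]
    rw [← Finset.sum_sub_distrib]
    apply Finset.sum_congr rfl
    intro m _
    ring

lemma iterate_sub_val {w : S → ℝ} (hw : ∀ t ∈ M.T, 0 ≤ w t) (k : ℕ) (v : S → ℝ) :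
    (M.reachUpdate w)^[k] v - M.reachVal w
      = (M.Qmat ^ k).mulVec (v - M.reachVal w) := by
  induction k with
  | zero => simp [Matrix.one_mulVec]
  | succ k ih =>
    rw [Function.iterate_succ_apply', M.update_sub_val hw, ih,
      Matrix.mulVec_mulVec, ← pow_succ']

lemma mulVec_norm_bound [Nonempty S] (hreach : ∀ a : S, reaches M.edge (M.T : Set S) a)
    {u : S → ℝ} (hu : ∀ t ∈ M.T, u t = 0) :
    ‖(M.Qmat ^ (Fintype.card S)).mulVec u‖
      ≤ (1 - M.pmin ^ (Fintype.card S)) * ‖u‖ := by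
  set n := Fintype.card S
  have hfac : 0 ≤ 1 - M.pmin ^ n := by
    have : M.pmin ^ n ≤ 1 := pow_le_one₀ M.pmin_nonneg M.pmin_le_one
    linarith
  have hrhs : 0 ≤ (1 - M.pmin ^ n) * ‖u‖ := mul_nonneg hfac (norm_nonneg u)
  rw [pi_norm_le_iff_of_nonneg hrhs]
  intro s
  rw [Real.norm_eq_abs]
  show |(M.Qmat ^ n).mulVec u s| ≤ _
  simp only [Matrix.mulVec, dotProduct]
  calc |∑ m : S, (M.Qmat ^ n) s m * u m|
      ≤ ∑ m : S, |(M.Qmat ^ n) s m * u m| := Finset.abs_sum_le_sum_abs _ _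
    _ ≤ ∑ m : S, (if m ∈ M.T then 0 else (M.Qmat ^ n) s m * ‖u‖) := by
        apply Finset.sum_le_sum
        intro m _
        by_cases hm : m ∈ M.T
        · simp [hm, hu m hm]
        · simp only [hm, if_false, abs_mul,
            abs_of_nonneg (M.Qmat_pow_nonneg n s m)]
          apply mul_le_mul_of_nonneg_left _ (M.Qmat_pow_nonneg n s m)
          calc |u m| = ‖u m‖ := (Real.norm_eq_abs _).symm
            _ ≤ ‖u‖ := norm_le_pi_norm u m
    _ = (∑ m ∈ Finset.univ.filter (fun x => x ∉ M.T), (M.Qmat ^ n) s m) * ‖u‖ := by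
        rw [Finset.sum_mul, Finset.sum_filter]
        apply Finset.sum_congr rfl
        intro m _
        by_cases hm : m ∈ M.T <;> simp [hm]
    _ = M.qres n s * ‖u‖ := rfl
    _ ≤ (1 - M.pmin ^ n) * ‖u‖ :=
        mul_le_mul_of_nonneg_right (M.qres_card hreach s) (norm_nonneg u)

lemma key_step [Nonempty S] (hreach : ∀ a : S, reaches M.edge (M.T : Set S) a)
    {w : S → ℝ} (hw : ∀ t ∈ M.T, 0 ≤ w t) (v : S → ℝ) (hv : ∀ t ∈ M.T, v t = w t) :
    ‖(M.reachUpdate w)^[Fintype.card S] v - M.reachVal w‖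
      ≤ (1 - M.pmin ^ (Fintype.card S)) * ‖v - M.reachVal w‖ := by
  rw [M.iterate_sub_val hw]
  apply M.mulVec_norm_bound hreach
  intro t ht
  simp [hv t ht, M.reachVal_target ht]

lemma iterate_target {w : S → ℝ} (v : S → ℝ) {m : ℕ} (hm : 1 ≤ m) :
    ∀ t ∈ M.T, (M.reachUpdate w)^[m] v t = w t := by
  intro t ht
  obtain ⟨m', rfl⟩ : ∃ m', m = m' + 1 := ⟨m - 1, by omega⟩
  rw [Function.iterate_succ_apply']
  simp [reachUpdate, ht]

end MC
end IterAux

/-- Contraction property of value iteration: with `n = |S|`, for any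
starting vector `v` agreeing with `w` on `T` and any `t ≥ 1`,
`‖L^{n·t} v - val‖_∞ ≤ (1 - p_min^n)^t · ‖v - val‖_∞`. -/
theorem stmt_18 {S : Type} [Fintype S] [DecidableEq S] [Nonempty S]
    (M : MC S) (hreach : ∀ a : S, reaches M.edge (M.T : Set S) a)
    (w : S → ℝ) (hw : ∀ t ∈ M.T, 0 ≤ w t) :
    ∀ v : S → ℝ, (∀ t ∈ M.T, v t = w t) → ∀ t : ℕ, 1 ≤ t →
      ‖(M.reachUpdate w)^[Fintype.card S * t] v - M.reachVal w‖
        ≤ (1 - M.pmin ^ (Fintype.card S)) ^ t * ‖v - M.reachVal w‖ := by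
  intro v hv
  set n := Fintype.card S with hn
  have hnpos : 1 ≤ n := Fintype.card_pos
  have hfac : 0 ≤ 1 - M.pmin ^ n := by
    have : M.pmin ^ n ≤ 1 := pow_le_one₀ M.pmin_nonneg M.pmin_le_one
    linarith
  intro t ht
  induction t with
  | zero => omega
  | succ t ih =>
    by_cases ht0 : t = 0
    · subst ht0
      rw [Nat.mul_one, pow_one]
      exact M.key_step hreach hw v hv
    · have ht1 : 1 ≤ t := by omega
      have hIH := ih ht1
      have hsplit : n * (t + 1) = n + n * t := by ring
      rw [hsplit, Function.iterate_add_apply]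
      have hagree : ∀ t' ∈ M.T, ((M.reachUpdate w)^[n * t] v) t' = w t' :=
        M.iterate_target v (Nat.mul_pos hnpos ht1)
      calc ‖(M.reachUpdate w)^[n] ((M.reachUpdate w)^[n * t] v) - M.reachVal w‖
          ≤ (1 - M.pmin ^ n) * ‖(M.reachUpdate w)^[n * t] v - M.reachVal w‖ :=
            M.key_step hreach hw _ hagree
        _ ≤ (1 - M.pmin ^ n) * ((1 - M.pmin ^ n) ^ t * ‖v - M.reachVal w‖) :=
            mul_le_mul_of_nonneg_left hIH hfac
        _ = (1 - M.pmin ^ n) ^ (t + 1) * ‖v - M.reachVal w‖ := by ring
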